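/- arXiv:1802.00079 — 2 statements merged into one kernel-verified Lean document; each statement's English description precedes it below -/
import Mathlib

section
/- Let (E, ρ) be a b_v(s) metric space, S : E → E a Kannan type mapping with constant γ ∈ [0, 1/2), and u₀ ∈ E. Then the Picard iteration sequence u_n = Sⁿ u₀ is a Cauchy sequence, i.e., ρ(u_n, u_{n+p}) → 0 as n → ∞ uniformly in p ≥ 1; specifically ρ(u_n, u_{n+p}) ≤ γ[(γ/(1−γ))^{n−1} + (γ/(1−γ))^{n+p−1}] ρ(u₀, S u₀). -/
open Filter Topology

/-- A `b_v(s)` metric space structure on `E`. -/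
structure BvMetric (E : Type*) (v : ℕ) (s : ℝ) where
  rho : E → E → ℝ
  nonneg : ∀ u w, 0 ≤ rho u w
  eq_iff : ∀ u w, rho u w = 0 ↔ u = w
  symm : ∀ u w, rho u w = rho w u
  one_le_s : 1 ≤ s
  one_le_v : 1 ≤ v
  /-- polygonal inequality along a chain `c 0 = u, c 1, …, c v, c (v+1) = w`,
  required when the interior points are pairwise distinct and differ from the endpoints. -/
  polygon : ∀ c : Fin (v + 2) → E,
    (Function.Injective fun i : Fin v => c i.succ.castSucc) →
    (∀ i : Fin v, c i.succ.castSucc ≠ c 0 ∧ c i.succ.castSucc ≠ c (Fin.last (v + 1))) →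
    rho (c 0) (c (Fin.last (v + 1))) ≤
      s * ∑ i : Fin (v + 1), rho (c i.castSucc) (c i.succ)

/-- Cauchy sequence with respect to a `b_v(s)` metric. -/
def BvMetric.IsCauchy {E : Type*} {v : ℕ} {s : ℝ} (d : BvMetric E v s) (u : ℕ → E) : Prop :=
  ∀ ε > (0 : ℝ), ∃ N, ∀ m ≥ N, ∀ n ≥ N, d.rho (u m) (u n) < ε

/-- Completeness: every Cauchy sequence converges. -/
def BvMetric.Complete {E : Type*} {v : ℕ} {s : ℝ} (d : BvMetric E v s) : Prop :=
  ∀ u : ℕ → E, d.IsCauchy u → ∃ x : E, Tendsto (fun n => d.rho (u n) x) atTop (𝓝 0)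

/-- `S` is weakly contractive with respect to the comparison function `φ`. -/
def BvMetric.WeaklyContractive {E : Type*} {v : ℕ} {s : ℝ} (d : BvMetric E v s)
    (S : E → E) (φ : ℝ → ℝ) : Prop :=
  ∀ u w, d.rho (S u) (S w) ≤ d.rho u w - φ (d.rho u w)

/-- `φ : [0,∞) → [0,∞)` is nondecreasing, continuous, and vanishes exactly at `0`. -/
def IsComparison (φ : ℝ → ℝ) : Prop :=
  MonotoneOn φ (Set.Ici 0) ∧ ContinuousOn φ (Set.Ici 0) ∧
    (∀ t ≥ (0 : ℝ), 0 ≤ φ t) ∧ (∀ t ≥ (0 : ℝ), (φ t = 0 ↔ t = 0))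

/-- `S` is a Kannan type mapping with constant `γ`. -/
def BvMetric.KannanType {E : Type*} {v : ℕ} {s : ℝ} (d : BvMetric E v s)
    (S : E → E) (γ : ℝ) : Prop :=
  ∀ u w, d.rho (S u) (S w) ≤ γ * (d.rho u (S u) + d.rho w (S w))

theorem bv_kannan_picard_cauchy {E : Type*} {v : ℕ} {s : ℝ}
    (d : BvMetric E v s) (S : E → E) (γ : ℝ)
    (hγ0 : 0 ≤ γ) (hγ : γ < 1 / 2) (hS : d.KannanType S γ) (u₀ : E) :
    (∀ n ≥ 1, ∀ p ≥ 1, d.rho (S^[n] u₀) (S^[n + p] u₀) ≤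
      γ * ((γ / (1 - γ)) ^ (n - 1) + (γ / (1 - γ)) ^ (n + p - 1)) * d.rho u₀ (S u₀)) ∧
    d.IsCauchy (fun n => S^[n] u₀) := by
  have h1γ : 0 < 1 - γ := by linarith
  set r := γ / (1 - γ) with hr
  have hr0 : 0 ≤ r := div_nonneg hγ0 h1γ.le
  have hr1 : r < 1 := by rw [hr, div_lt_one h1γ]; linarith
  set a : ℕ → ℝ := fun k => d.rho (S^[k] u₀) (S^[k + 1] u₀) with ha
  have hstep : ∀ k, a (k + 1) ≤ r * a k := by
    intro k
    have e1 : S^[k + 1] u₀ = S (S^[k] u₀) := Function.iterate_succ_apply' S k u₀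
    have e2 : S^[k + 1 + 1] u₀ = S (S^[k + 1] u₀) := Function.iterate_succ_apply' S (k + 1) u₀
    have h := hS (S^[k] u₀) (S^[k + 1] u₀)
    have h2 : a (k + 1) ≤ γ * (a k + a (k + 1)) := by
      simp only [ha]
      rw [e2, e1]
      rw [e1] at h
      exact h
    rw [hr, div_mul_eq_mul_div, le_div_iff₀ h1γ]
    nlinarith
  have hgeo : ∀ k, a k ≤ r ^ k * a 0 := by
    intro k
    induction k with
    | zero => simp
    | succ k ih =>
      calc a (k + 1) ≤ r * a k := hstep k
        _ ≤ r * (r ^ k * a 0) := mul_le_mul_of_nonneg_left ih hr0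
        _ = r ^ (k + 1) * a 0 := by ring
  have ha0 : a 0 = d.rho u₀ (S u₀) := by simp [ha]
  have hmain : ∀ n ≥ 1, ∀ p ≥ 1, d.rho (S^[n] u₀) (S^[n + p] u₀) ≤
      γ * (r ^ (n - 1) + r ^ (n + p - 1)) * d.rho u₀ (S u₀) := by
    intro n hn p hp
    obtain ⟨m, rfl⟩ : ∃ m, n = m + 1 := ⟨n - 1, (Nat.succ_pred_eq_of_pos hn).symm⟩
    have e1 : S^[m + 1] u₀ = S (S^[m] u₀) := Function.iterate_succ_apply' S m u₀
    have e2 : S^[m + 1 + p] u₀ = S (S^[m + p] u₀) := by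
      rw [show m + 1 + p = (m + p) + 1 by ring]
      exact Function.iterate_succ_apply' S (m + p) u₀
    have h := hS (S^[m] u₀) (S^[m + p] u₀)
    have en1 : m + 1 - 1 = m := rfl
    have en2 : m + 1 + p - 1 = m + p := by omega
    rw [en1, en2, e1, e2]
    have h3 : d.rho (S (S^[m] u₀)) (S (S^[m + p] u₀)) ≤ γ * (a m + a (m + p)) := by
      simp only [ha]
      rw [e1, Function.iterate_succ_apply' S (m + p) u₀]
      exact h
    have h4 : a m + a (m + p) ≤ (r ^ m + r ^ (m + p)) * a 0 := by
      have := hgeo m; have := hgeo (m + p); nlinarith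
    calc d.rho (S (S^[m] u₀)) (S (S^[m + p] u₀)) ≤ γ * (a m + a (m + p)) := h3
      _ ≤ γ * ((r ^ m + r ^ (m + p)) * a 0) := mul_le_mul_of_nonneg_left h4 hγ0
      _ = γ * (r ^ m + r ^ (m + p)) * d.rho u₀ (S u₀) := by rw [← ha0]; ring
  refine ⟨hmain, ?_⟩
  intro ε hε
  have a0nn : 0 ≤ a 0 := d.nonneg _ _
  have ht : Tendsto (fun N : ℕ => 2 * γ * r ^ N * a 0) atTop (𝓝 0) := by
    have h := tendsto_pow_atTop_nhds_zero_of_lt_one hr0 hr1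
    have := (h.const_mul (2 * γ)).mul_const (a 0)
    simpa using this
  obtain ⟨N, hN⟩ := (ht.eventually_lt_const hε).exists_forall_of_atTop
  refine ⟨N + 1, ?_⟩
  have key : ∀ m n : ℕ, N + 1 ≤ m → m < n → d.rho (S^[m] u₀) (S^[n] u₀) < ε := by
    intro m n hm hmn
    have hp : 1 ≤ n - m := by omega
    have hb := hmain m (by omega) (n - m) hp
    rw [show m + (n - m) = n by omega] at hb
    have e1 : r ^ (m - 1) ≤ r ^ N := pow_le_pow_of_le_one hr0 hr1.le (by omega)
    have e2 : r ^ (n - 1) ≤ r ^ N := pow_le_pow_of_le_one hr0 hr1.le (by omega)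
    have hsum : r ^ (m - 1) + r ^ (n - 1) ≤ 2 * r ^ N := by linarith
    have : γ * (r ^ (m - 1) + r ^ (n - 1)) * d.rho u₀ (S u₀) ≤ 2 * γ * r ^ N * a 0 := by
      rw [ha0]
      calc γ * (r ^ (m - 1) + r ^ (n - 1)) * d.rho u₀ (S u₀)
          ≤ γ * (2 * r ^ N) * d.rho u₀ (S u₀) := by
            exact mul_le_mul_of_nonneg_right (mul_le_mul_of_nonneg_left hsum hγ0)
              (d.nonneg u₀ (S u₀))
        _ = 2 * γ * r ^ N * d.rho u₀ (S u₀) := by ring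
    exact lt_of_le_of_lt (le_trans hb this) (hN N le_rfl)
  intro m hm n hn
  rcases lt_trichotomy m n with h | h | h
  · exact key m n hm h
  · subst h
    rw [(d.eq_iff _ _).2 rfl]
    exact hε
  · rw [d.symm]
    exact key n m hn h
end

section
/- Let (E, ρ) be a metric space (the case v = s = 1), S : E → E weakly contractive with respect to φ : [0,∞) → [0,∞) nondecreasing, continuous, and φ(t)=0 iff t=0, and let u₀ ∈ E with u_{n+1} = S u_n. Then for any fixed p ≥ 1, the sequence α_n = ρ(u_n, u_{n+p}) is nonincreasing and converges to 0. -/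
open Filter Topology

theorem weakly_contractive_gap_antitone_tendsto_zero {E : Type*} [MetricSpace E]
    (S : E → E) (φ : ℝ → ℝ)
    (hmono : MonotoneOn φ (Set.Ici 0)) (hcont : ContinuousOn φ (Set.Ici 0))
    (hpos : ∀ t ≥ (0 : ℝ), 0 ≤ φ t) (hzero : ∀ t ≥ (0 : ℝ), (φ t = 0 ↔ t = 0))
    (hS : ∀ u w : E, dist (S u) (S w) ≤ dist u w - φ (dist u w))
    (u₀ : E) (p : ℕ) (hp : 1 ≤ p) :
    Antitone (fun n => dist (S^[n] u₀) (S^[n + p] u₀)) ∧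
    Tendsto (fun n => dist (S^[n] u₀) (S^[n + p] u₀)) atTop (𝓝 0) := by
  set α : ℕ → ℝ := fun n => dist (S^[n] u₀) (S^[n + p] u₀) with hα
  have hstep : ∀ n, α (n + 1) ≤ α n - φ (α n) := by
    intro n
    have h1 : S^[n + 1] u₀ = S (S^[n] u₀) := Function.iterate_succ_apply' S n u₀
    have h2 : S^[n + 1 + p] u₀ = S (S^[n + p] u₀) := by
      rw [show n + 1 + p = (n + p) + 1 by ring, Function.iterate_succ_apply' S (n + p) u₀]
    simp only [hα, h1, h2]
    exact hS _ _
  have hanti : Antitone α := antitone_nat_of_succ_le fun n =>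
    le_trans (hstep n) (by linarith [hpos (α n) dist_nonneg])
  refine ⟨hanti, ?_⟩
  have hbdd : BddBelow (Set.range α) := ⟨0, fun x ⟨n, hn⟩ => hn ▸ dist_nonneg⟩
  set L : ℝ := ⨅ n, α n with hL
  have hT : Tendsto α atTop (𝓝 L) := tendsto_atTop_ciInf hanti hbdd
  have hL0 : 0 ≤ L := le_ciInf fun n => dist_nonneg
  have hφT : Tendsto (fun n => φ (α n)) atTop (𝓝 (φ L)) := by
    have : Tendsto α atTop (𝓝[Set.Ici 0] L) :=
      tendsto_nhdsWithin_iff.mpr ⟨hT, Eventually.of_forall fun n => dist_nonneg⟩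
    exact (hcont L hL0).tendsto.comp this
  have hT1 : Tendsto (fun n => α (n + 1)) atTop (𝓝 L) :=
    hT.comp (tendsto_add_atTop_nat 1)
  have hle : L ≤ L - φ L :=
    le_of_tendsto_of_tendsto' hT1 (hT.sub hφT) hstep
  have hφL : φ L = 0 := le_antisymm (by linarith) (hpos L hL0)
  have : L = 0 := (hzero L hL0).mp hφL
  rwa [this] at hT
end
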